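/- Let (Ω, F, P) be a probability space and let Y₀, Y₁, Y₂, … be a sequence of random variables on Ω, each taking only the values 0 or 1, each with expectation μ. Assume there exist real numbers r and c with 0 < r < 1 and 0 < c < 1 such that for all natural numbers i, j one has E[(Y_i − μ)·(Y_j − μ)] ≤ r^⌊c·|i−j|⌋. Then, almost surely, lim_{n→∞} (1/n)·∑_{i=0}^{n} Y_i = μ. -/

import Mathlib

open MeasureTheory Filter


lemma geo_dist_sum (q : ℝ) (hq0 : 0 ≤ q) (hq1 : q < 1) (n i : ℕ) :
    ∑ j ∈ Finset.range n, q ^ (Nat.dist i j) ≤ 2 / (1 - q) := by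
  have h1q : 0 < 1 - q := by linarith
  have hgeom : ∀ m : ℕ, ∑ d ∈ Finset.range m, q ^ d ≤ 1 / (1 - q) := by
    intro m
    rw [geom_sum_eq (ne_of_lt hq1)]
    have heq : (q ^ m - 1) / (q - 1) = (1 - q ^ m) / (1 - q) := by
      rw [← neg_div_neg_eq]; ring_nf
    rw [heq]
    gcongr
    have : 0 ≤ q ^ m := pow_nonneg hq0 m
    linarith
  rw [← Finset.sum_filter_add_sum_filter_not (Finset.range n) (fun j => j ≤ i)]
  have hle : ∑ j ∈ Finset.filter (fun j => j ≤ i) (Finset.range n), q ^ Nat.dist i j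
      ≤ 1 / (1 - q) := by
    calc ∑ j ∈ Finset.filter (fun j => j ≤ i) (Finset.range n), q ^ Nat.dist i j
        ≤ ∑ j ∈ Finset.range (i + 1), q ^ Nat.dist i j := by
          apply Finset.sum_le_sum_of_subset_of_nonneg
          · intro j hj
            simp only [Finset.mem_filter, Finset.mem_range] at *
            omega
          · intro j _ _; positivity
      _ = ∑ j ∈ Finset.range (i + 1), q ^ (i - j) := by
          apply Finset.sum_congr rfl
          intro j hj
          simp only [Finset.mem_range] at hj
          rw [Nat.dist_eq_sub_of_le_right (by omega)]
      _ = ∑ d ∈ Finset.range (i + 1), q ^ d := by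
          simpa using Finset.sum_range_reflect (fun d => q ^ d) (i + 1)
      _ ≤ 1 / (1 - q) := hgeom _
  have hgt : ∑ j ∈ Finset.filter (fun j => ¬ j ≤ i) (Finset.range n), q ^ Nat.dist i j
      ≤ 1 / (1 - q) := by
    have heq : Finset.filter (fun j => ¬ j ≤ i) (Finset.range n) = Finset.Ico (i+1) n := by
      ext j; simp [Finset.mem_filter, Finset.mem_Ico]; omega
    rw [heq, Finset.sum_Ico_eq_sum_range]
    calc ∑ k ∈ Finset.range (n - (i+1)), q ^ Nat.dist i (i + 1 + k)
        = ∑ k ∈ Finset.range (n - (i+1)), q ^ (k + 1) := by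
          apply Finset.sum_congr rfl; intro k _
          rw [Nat.dist_eq_sub_of_le (by omega)]
          congr 1; omega
      _ ≤ ∑ k ∈ Finset.range (n - (i+1)), q ^ k := by
          apply Finset.sum_le_sum; intro k _
          exact pow_le_pow_of_le_one hq0 (le_of_lt hq1) (by omega)
      _ ≤ 1 / (1 - q) := hgeom _
  have h2 : (2:ℝ) / (1 - q) = 1 / (1-q) + 1/(1-q) := by ring
  rw [h2]
  exact add_le_add hle hgt

lemma interp (v : ℕ → ℝ) (h0 : v 0 = 0) (hstep : ∀ n, |v (n+1) - v n| ≤ 1)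
    (hsq : Tendsto (fun k : ℕ => v (k^2) / (k:ℝ)^2) atTop (nhds 0)) :
    Tendsto (fun n : ℕ => v n / n) atTop (nhds 0) := by
  -- increments bound
  have hdiff : ∀ m n : ℕ, n ≤ m → |v m - v n| ≤ (m : ℝ) - n := by
    intro m
    induction m with
    | zero => intro n hn; interval_cases n; simp
    | succ m ih =>
      intro n hn
      rcases Nat.lt_or_ge n (m+1) with h | h
      · have h1 := ih n (by omega)
        have h2 := hstep m
        have : |v (m+1) - v n| ≤ |v (m+1) - v m| + |v m - v n| := by
          have := abs_sub_abs_le_abs_sub (v (m+1)) (v n)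
          calc |v (m+1) - v n| = |(v (m+1) - v m) + (v m - v n)| := by ring_nf
            _ ≤ |v (m+1) - v m| + |v m - v n| := abs_add_le _ _
        push_cast
        push_cast at h1
        linarith
      · have : n = m + 1 := by omega
        subst this; simp
  -- the majorant
  set f : ℕ → ℝ := fun k => |v (k^2)| / (k:ℝ)^2 + 2 / k with hf
  have hftendsto : Tendsto f atTop (nhds 0) := by
    have h1 : Tendsto (fun k : ℕ => |v (k^2)| / (k:ℝ)^2) atTop (nhds 0) := by
      have := hsq.abs
      simp only [abs_zero] at this
      refine this.congr (fun k => ?_)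
      rw [abs_div, abs_of_nonneg (a := ((k:ℝ)^2)) (by positivity)]
    have h2 : Tendsto (fun k : ℕ => (2:ℝ) / k) atTop (nhds 0) :=
      tendsto_const_div_atTop_nhds_zero_nat 2
    simpa using h1.add h2
  have hsqrt : Tendsto (fun n : ℕ => Nat.sqrt n) atTop atTop := by
    apply tendsto_atTop_atTop_of_monotone (fun a b hab => Nat.sqrt_le_sqrt hab)
    intro k; exact ⟨k^2, by simp [Nat.sqrt_eq' ]⟩
  have hcomp : Tendsto (fun n : ℕ => f (Nat.sqrt n)) atTop (nhds 0) :=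
    hftendsto.comp hsqrt
  rw [tendsto_zero_iff_abs_tendsto_zero]
  apply squeeze_zero' (Eventually.of_forall (fun n => abs_nonneg _))
    ?_ hcomp
  filter_upwards [eventually_ge_atTop 1] with n hn
  set k := Nat.sqrt n with hk
  have hk1 : 1 ≤ k := by
    rw [hk]; exact Nat.one_le_iff_ne_zero.mpr (by
      intro h; have := Nat.sqrt_eq_zero.mp h; omega)
  have hk2 : k^2 ≤ n := Nat.sqrt_le' n
  have hk3 : n < (k+1)^2 := Nat.lt_succ_sqrt' n
  have hkR : (0:ℝ) < (k:ℝ)^2 := by positivity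
  have hnR : (0:ℝ) < (n:ℝ) := by exact_mod_cast hn
  have hbound : |v n| ≤ |v (k^2)| + 2 * k := by
    have h1 := hdiff n (k^2) hk2
    have h2 : |v n| ≤ |v (k^2)| + ((n:ℝ) - (k^2:ℕ)) := by
      have := abs_add_le (v (k^2)) (v n - v (k^2))
      simp only [add_sub_cancel] at this
      linarith
    have h3 : (n:ℝ) - ((k:ℝ))^2 ≤ 2 * k := by
      have hn2 : n ≤ k^2 + 2*k := by nlinarith [hk3]
      have : (n:ℝ) ≤ (k:ℝ)^2 + 2*k := by exact_mod_cast hn2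
      linarith
    push_cast at h2 ⊢
    linarith
  have hkn : (k:ℝ)^2 ≤ (n:ℝ) := by exact_mod_cast hk2
  calc |v n / n| = |v n| / n := by rw [abs_div, abs_of_nonneg hnR.le]
    _ ≤ (|v (k^2)| + 2*k) / n := by gcongr
    _ ≤ (|v (k^2)| + 2*k) / (k:ℝ)^2 := by
        gcongr <;> positivity
    _ = |v (k^2)| / (k:ℝ)^2 + 2*k/(k:ℝ)^2 := by ring
    _ = f k := by
        rw [hf]
        have hk0 : (k:ℝ) ≠ 0 := by
          have : (1:ℝ) ≤ (k:ℝ) := by exact_mod_cast hk1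
          linarith
        field_simp

lemma pow_floor_le (r c : ℝ) (hr0 : 0 < r) (hr1 : r < 1) (hc0 : 0 < c) (d : ℕ) :
    r ^ (⌊c * (d:ℝ)⌋₊) ≤ r⁻¹ * (r ^ c) ^ d := by
  have hcd : 0 ≤ c * (d:ℝ) := by positivity
  have hfl : c * (d:ℝ) - 1 < (⌊c * (d:ℝ)⌋₊ : ℝ) := Nat.sub_one_lt_floor _
  calc r ^ (⌊c * (d:ℝ)⌋₊) = r ^ ((⌊c * (d:ℝ)⌋₊ : ℕ) : ℝ) := (Real.rpow_natCast r _).symm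
    _ ≤ r ^ (c * (d:ℝ) - 1) := Real.rpow_le_rpow_of_exponent_ge hr0 hr1.le (by linarith)
    _ = r⁻¹ * (r ^ c) ^ d := by
        rw [Real.rpow_sub hr0, Real.rpow_one, ← Real.rpow_natCast (r ^ c) d,
          ← Real.rpow_mul hr0.le]
        ring

lemma cast_abs_dist (i j : ℕ) : |(i:ℝ) - (j:ℝ)| = (Nat.dist i j : ℝ) := by
  rcases le_total i j with h | h
  · have h' : (i:ℝ) ≤ (j:ℝ) := Nat.cast_le.mpr h
    rw [Nat.dist_eq_sub_of_le h, abs_of_nonpos (by linarith)]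
    push_cast [h]
    ring
  · have h' : (j:ℝ) ≤ (i:ℝ) := Nat.cast_le.mpr h
    rw [Nat.dist_eq_sub_of_le_right h, abs_of_nonneg (by linarith)]
    push_cast [h]
    ring

lemma var_bound {Ω : Type*} [MeasurableSpace Ω] (P : Measure Ω) [IsProbabilityMeasure P]
    (X : ℕ → Ω → ℝ) (hmeas : ∀ i, Measurable (X i)) (hbd : ∀ i ω, |X i ω| ≤ 1)
    (r c : ℝ) (hr0 : 0 < r) (hr1 : r < 1) (hc0 : 0 < c)
    (hcov : ∀ i j : ℕ, ∫ ω, X i ω * X j ω ∂P ≤ r ^ (⌊c * |(i : ℝ) - (j : ℝ)|⌋₊)) (n : ℕ) :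
    ∫ ω, (∑ i ∈ Finset.range n, X i ω)^2 ∂P ≤ n * (r⁻¹ * (2 / (1 - r ^ c))) := by
  set q : ℝ := r ^ c with hq
  have hq0 : 0 ≤ q := (Real.rpow_pos_of_pos hr0 c).le
  have hq1 : q < 1 := Real.rpow_lt_one hr0.le hr1 hc0
  have hprod_int : ∀ i j, Integrable (fun ω => X i ω * X j ω) P := by
    intro i j
    apply Integrable.mono' (integrable_const 1)
      ((hmeas i).mul (hmeas j)).aestronglyMeasurable
    filter_upwards with ω
    rw [Real.norm_eq_abs, Pi.mul_apply, abs_mul]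
    calc |X i ω| * |X j ω| ≤ 1 * 1 := mul_le_mul (hbd i ω) (hbd j ω) (abs_nonneg _) zero_le_one
      _ = 1 := mul_one 1
  have hexpand : ∫ ω, (∑ i ∈ Finset.range n, X i ω)^2 ∂P
      = ∑ i ∈ Finset.range n, ∑ j ∈ Finset.range n, ∫ ω, X i ω * X j ω ∂P := by
    have h1 : ∀ ω, (∑ i ∈ Finset.range n, X i ω)^2
        = ∑ i ∈ Finset.range n, ∑ j ∈ Finset.range n, X i ω * X j ω := by
      intro ω; rw [sq, Finset.sum_mul_sum]
    simp_rw [h1]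
    rw [integral_finset_sum _ (fun i _ => integrable_finset_sum _ (fun j _ => hprod_int i j))]
    exact Finset.sum_congr rfl fun i _ =>
      integral_finset_sum _ (fun j _ => hprod_int i j)
  rw [hexpand]
  calc ∑ i ∈ Finset.range n, ∑ j ∈ Finset.range n, ∫ ω, X i ω * X j ω ∂P
      ≤ ∑ i ∈ Finset.range n, ∑ j ∈ Finset.range n, r⁻¹ * q ^ (Nat.dist i j) := by
        apply Finset.sum_le_sum; intro i _
        apply Finset.sum_le_sum; intro j _
        calc ∫ ω, X i ω * X j ω ∂P ≤ r ^ (⌊c * |(i : ℝ) - (j : ℝ)|⌋₊) := hcov i j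
          _ = r ^ (⌊c * ((Nat.dist i j : ℕ):ℝ)⌋₊) := by rw [cast_abs_dist]
          _ ≤ r⁻¹ * q ^ (Nat.dist i j) := pow_floor_le r c hr0 hr1 hc0 _
    _ ≤ ∑ i ∈ Finset.range n, r⁻¹ * (2 / (1 - q)) := by
        apply Finset.sum_le_sum; intro i _
        rw [← Finset.mul_sum]
        apply mul_le_mul_of_nonneg_left _ (inv_nonneg.mpr hr0.le)
        exact geo_dist_sum q hq0 hq1 n i
    _ = n * (r⁻¹ * (2 / (1 - q))) := by
        rw [Finset.sum_const, Finset.card_range, nsmul_eq_mul]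

open scoped ENNReal

/-- Variant of the strong law of large numbers for correlated 0/1-valued
random variables with exponentially decaying correlations. -/
theorem stmt0 {Ω : Type*} [MeasurableSpace Ω] (P : Measure Ω) [IsProbabilityMeasure P]
    (Y : ℕ → Ω → ℝ) (hmeas : ∀ i, Measurable (Y i))
    (hval : ∀ i ω, Y i ω = 0 ∨ Y i ω = 1)
    (μ : ℝ) (hexp : ∀ i, ∫ ω, Y i ω ∂P = μ)
    (r c : ℝ) (hr0 : 0 < r) (hr1 : r < 1) (hc0 : 0 < c) (hc1 : c < 1)
    (hcov : ∀ i j : ℕ,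
      ∫ ω, (Y i ω - μ) * (Y j ω - μ) ∂P ≤ r ^ (⌊c * |(i : ℝ) - (j : ℝ)|⌋₊)) :
    ∀ᵐ ω ∂P, Tendsto (fun n : ℕ => (∑ i ∈ Finset.range (n + 1), Y i ω) / n)
      atTop (nhds μ) := by
  have hYint : ∀ i, Integrable (Y i) P := by
    intro i
    apply Integrable.mono' (integrable_const 1) (hmeas i).aestronglyMeasurable
    filter_upwards with ω
    rcases hval i ω with h | h <;> simp [h]
  have hμ0 : 0 ≤ μ := by
    rw [← hexp 0]
    exact integral_nonneg fun ω => by rcases hval 0 ω with h | h <;> simp [h]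
  have hμ1 : μ ≤ 1 := by
    rw [← hexp 0]
    calc ∫ ω, Y 0 ω ∂P ≤ ∫ _, (1:ℝ) ∂P :=
          integral_mono (hYint 0) (integrable_const 1)
            (fun ω => by rcases hval 0 ω with h | h <;> simp [h])
      _ = 1 := by simp
  set X : ℕ → Ω → ℝ := fun i ω => Y i ω - μ with hX
  have hXmeas : ∀ i, Measurable (X i) := fun i => (hmeas i).sub measurable_const
  have hXbd : ∀ i ω, |X i ω| ≤ 1 := by
    intro i ω
    rw [abs_le]
    rcases hval i ω with h | h <;> simp only [hX, h] <;> constructor <;> linarith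
  set T : ℕ → Ω → ℝ := fun n ω => ∑ i ∈ Finset.range n, X i ω with hT
  have hTmeas : ∀ n, Measurable (T n) :=
    fun n => Finset.measurable_sum _ (fun i _ => hXmeas i)
  set K : ℝ := r⁻¹ * (2 / (1 - r ^ c)) with hK
  have hq1 : r ^ c < 1 := Real.rpow_lt_one hr0.le hr1 hc0
  have hq0 : 0 ≤ r ^ c := (Real.rpow_pos_of_pos hr0 c).le
  have hK0 : 0 ≤ K := by
    rw [hK]
    have : 0 < 1 - r ^ c := by linarith
    positivity
  have hvar : ∀ n : ℕ, ∫ ω, (T n ω)^2 ∂P ≤ n * K :=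
    fun n => var_bound P X hXmeas hXbd r c hr0 hr1 hc0 hcov n
  set g : ℕ → Ω → ℝ := fun k ω => (T (k^2) ω / (k:ℝ)^2)^2 with hg
  have hgmeas : ∀ k, Measurable (g k) :=
    fun k => ((hTmeas (k^2)).div_const _).pow_const 2
  have hgnn : ∀ k ω, 0 ≤ g k ω := fun k ω => sq_nonneg _
  have hTabs : ∀ n ω, |T n ω| ≤ n := by
    intro n ω
    calc |T n ω| ≤ ∑ i ∈ Finset.range n, |X i ω| := Finset.abs_sum_le_sum_abs _ _
      _ ≤ ∑ _i ∈ Finset.range n, (1:ℝ) := Finset.sum_le_sum fun i _ => hXbd i ω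
      _ = n := by simp
  have hgle : ∀ k ω, g k ω ≤ 1 := by
    intro k ω
    rcases Nat.eq_zero_or_pos k with h | h
    · subst h; simp [hg]
    · have hk2 : (0:ℝ) < (k:ℝ)^2 := by positivity
      have habs : |T (k^2) ω / (k:ℝ)^2| ≤ 1 := by
        rw [abs_div, abs_of_nonneg hk2.le, div_le_one hk2]
        calc |T (k^2) ω| ≤ ((k^2 : ℕ):ℝ) := hTabs _ ω
          _ = (k:ℝ)^2 := by push_cast; ring
      calc g k ω = |T (k^2) ω / (k:ℝ)^2|^2 := (sq_abs _).symm
        _ ≤ 1^2 := pow_le_pow_left₀ (abs_nonneg _) habs 2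
        _ = 1 := one_pow 2
  have hgint : ∀ k, Integrable (g k) P := by
    intro k
    apply Integrable.mono' (integrable_const 1) (hgmeas k).aestronglyMeasurable
    filter_upwards with ω
    rw [Real.norm_eq_abs, abs_of_nonneg (hgnn k ω)]
    exact hgle k ω
  have hgintle : ∀ k : ℕ, ∫ ω, g k ω ∂P ≤ K / (k:ℝ)^2 := by
    intro k
    rcases Nat.eq_zero_or_pos k with h | h
    · subst h
      simp [hg]
    · have hk2 : (0:ℝ) < (k:ℝ)^2 := by positivity
      have heq : ∫ ω, g k ω ∂P = (∫ ω, (T (k^2) ω)^2 ∂P) / ((k:ℝ)^2)^2 := by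
        simp_rw [hg, div_pow]
        exact integral_div _ _
      rw [heq, div_le_iff₀ (by positivity)]
      calc ∫ ω, (T (k^2) ω)^2 ∂P ≤ ((k^2 : ℕ):ℝ) * K := hvar (k^2)
        _ = (k:ℝ)^2 * K := by push_cast; ring
        _ = K / (k:ℝ)^2 * ((k:ℝ)^2)^2 := by field_simp
  set F : ℕ → Ω → ℝ≥0∞ := fun k ω => ENNReal.ofReal (g k ω) with hF
  have hFmeas : ∀ k, Measurable (F k) := fun k => (hgmeas k).ennreal_ofReal
  have hFint : ∀ k, ∫⁻ ω, F k ω ∂P = ENNReal.ofReal (∫ ω, g k ω ∂P) :=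
    fun k => (ofReal_integral_eq_lintegral_ofReal (hgint k)
      (Eventually.of_forall (hgnn k))).symm
  have hsummable : Summable (fun k : ℕ => K / (k:ℝ)^2) := by
    have h2 : Summable (fun k : ℕ => 1 / (k:ℝ)^2) :=
      Real.summable_one_div_nat_pow.mpr one_lt_two
    exact (h2.mul_left K).congr fun k => by rw [mul_one_div]
  have htsum_ne : ∑' k, ∫⁻ ω, F k ω ∂P ≠ ⊤ := by
    have hle : ∑' k, ∫⁻ ω, F k ω ∂P ≤ ∑' k : ℕ, ENNReal.ofReal (K / (k:ℝ)^2) := by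
      simp_rw [hFint]
      exact ENNReal.tsum_le_tsum fun k => ENNReal.ofReal_le_ofReal (hgintle k)
    have hne : ∑' k : ℕ, ENNReal.ofReal (K / (k:ℝ)^2) ≠ ⊤ := by
      rw [← ENNReal.ofReal_tsum_of_nonneg (fun k => by positivity) hsummable]
      exact ENNReal.ofReal_ne_top
    exact ne_top_of_le_ne_top hne hle
  have hlint : ∫⁻ ω, ∑' k, F k ω ∂P ≠ ⊤ := by
    rw [lintegral_tsum (fun k => (hFmeas k).aemeasurable)]
    exact htsum_ne
  have hae : ∀ᵐ ω ∂P, ∑' k, F k ω ≠ ⊤ := by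
    filter_upwards [ae_lt_top (Measurable.ennreal_tsum hFmeas) hlint] with ω h
    exact h.ne
  have haelim : ∀ᵐ ω ∂P, Tendsto (fun k : ℕ => T (k^2) ω / (k:ℝ)^2) atTop (nhds 0) := by
    filter_upwards [hae] with ω hω
    have h1 : Tendsto (fun k => F k ω) atTop (nhds 0) :=
      ENNReal.tendsto_atTop_zero_of_tsum_ne_top hω
    have h2 : Tendsto (fun k => g k ω) atTop (nhds 0) := by
      have h3 := (ENNReal.tendsto_toReal (by simp : (0:ℝ≥0∞) ≠ ⊤)).comp h1
      simp only [ENNReal.toReal_zero] at h3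
      refine h3.congr fun k => ?_
      simp only [Function.comp_apply, hF, ENNReal.toReal_ofReal (hgnn k ω)]
    have h3 : Tendsto (fun k => |T (k^2) ω / (k:ℝ)^2|) atTop (nhds 0) := by
      have h4 := h2.sqrt
      rw [Real.sqrt_zero] at h4
      refine h4.congr fun k => Real.sqrt_sq_eq_abs _
    exact (tendsto_zero_iff_abs_tendsto_zero _).mpr h3
  filter_upwards [haelim] with ω hω
  have hv : Tendsto (fun n : ℕ => T n ω / n) atTop (nhds 0) := by
    apply interp (fun n => T n ω) (by simp [hT]) ?_ hω
    intro n
    have hd : T (n+1) ω - T n ω = X n ω := by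
      simp only [hT, Finset.sum_range_succ]
      ring
    rw [hd]; exact hXbd n ω
  have h1 : Tendsto (fun n : ℕ => T (n+1) ω / ((n:ℝ)+1)) atTop (nhds 0) := by
    have h2 := hv.comp (tendsto_add_atTop_nat 1)
    refine h2.congr fun n => ?_
    simp only [Function.comp_apply]
    push_cast
    ring_nf
  have h2 : Tendsto (fun n : ℕ => ((n:ℝ)+1) / n) atTop (nhds 1) := by
    have h3 := (tendsto_const_nhds (x := (1:ℝ)) (f := atTop (α := ℕ))).add
      (tendsto_const_div_atTop_nhds_zero_nat 1)
    rw [add_zero] at h3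
    apply h3.congr'
    filter_upwards [eventually_ge_atTop 1] with n hn
    have hn0 : (n:ℝ) ≠ 0 := by
      have : (1:ℝ) ≤ (n:ℝ) := by exact_mod_cast hn
      linarith
    field_simp
  have h3 : Tendsto (fun n : ℕ => T (n+1) ω / ((n:ℝ)+1) * (((n:ℝ)+1)/n)
      + μ * (((n:ℝ)+1)/n)) atTop (nhds μ) := by
    have h4 := (h1.mul h2).add ((tendsto_const_nhds (x := μ) (f := atTop (α := ℕ))).mul h2)
    simpa using h4
  apply h3.congr'
  filter_upwards [eventually_ge_atTop 1] with n hn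
  have hn0 : (n:ℝ) ≠ 0 := by
    have : (1:ℝ) ≤ (n:ℝ) := by exact_mod_cast hn
    linarith
  have hn1 : ((n:ℝ)+1) ≠ 0 := by positivity
  have hsum : ∑ i ∈ Finset.range (n+1), Y i ω = T (n+1) ω + ((n:ℝ)+1) * μ := by
    simp only [hT, hX, Finset.sum_sub_distrib, Finset.sum_const, Finset.card_range,
      nsmul_eq_mul]
    push_cast
    ring
  rw [hsum]
  field_simp
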